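/- The four tetrahedral states ψ_1 = (1,1,1)/√3, ψ_2 = (1,−1,−1)/√3, ψ_3 = (−1,−1,1)/√3, ψ_4 = (−1,1,−1)/√3 in ℂ^3 form an indexed list that is 2-learnable but not 1-learnable; that is, the list has learning width exactly 2. -/

import Mathlib

open Matrix BigOperators Finset ComplexOrder

noncomputable section

/-- The number of nonzero entries of a vector in `ℂ^n`. -/
def suppCard {n : ℕ} (v : Fin n → ℂ) : ℕ :=
  (Finset.univ.filter fun i => v i ≠ 0).card

/-- A matrix `X` is `k`-incoherent if it can be written as `∑ vᵢ vᵢ*` where each `vᵢ`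
has at most `k` nonzero entries. -/
def KIncoherent {n : ℕ} (k : ℕ) (X : Matrix (Fin n) (Fin n) ℂ) : Prop :=
  ∃ (m : ℕ) (v : Fin m → (Fin n → ℂ)),
    (∀ i, suppCard (v i) ≤ k) ∧ X = ∑ i, vecMulVec (v i) (star (v i))

/-- The set `I_k` of positive semidefinite, `k`-incoherent matrices with trace at most `1`. -/
def Ik (n k : ℕ) : Set (Matrix (Fin n) (Fin n) ℂ) :=
  {X | X.PosSemidef ∧ KIncoherent k X ∧ X.trace.re ≤ 1}

/-- The Gram matrix of a list of vectors in `ℂ^d`. -/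
def gramMatrix {n d : ℕ} (ψ : Fin n → (Fin d → ℂ)) : Matrix (Fin n) (Fin n) ℂ :=
  Matrix.of fun i j => star (ψ i) ⬝ᵥ ψ j

/-- A list of states `ψ₁, …, ψₙ` is `k`-learnable if there is a POVM indexed by the
`k`-element subsets of `{1, …, n}` such that `⟨ψᵢ, M_S ψᵢ⟩ = 0` whenever `i ∉ S`. -/
def KLearnable {n d : ℕ} (k : ℕ) (ψ : Fin n → (Fin d → ℂ)) : Prop :=
  ∃ M : {S : Finset (Fin n) // S.card = k} → Matrix (Fin d) (Fin d) ℂ,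
    (∀ S, (M S).PosSemidef) ∧ (∑ S, M S) = 1 ∧
    ∀ (S : {S : Finset (Fin n) // S.card = k}) (i : Fin n),
      i ∉ S.val → star (ψ i) ⬝ᵥ ((M S) *ᵥ ψ i) = 0

/-- The Frobenius norm of a square complex matrix. -/
def frobNorm {m : ℕ} (A : Matrix (Fin m) (Fin m) ℂ) : ℝ :=
  Real.sqrt (∑ i, ∑ j, ‖A i j‖ ^ 2)

/-- Rank-one matrices `v v*` are positive semidefinite. -/
lemma psd_vvs {n : ℕ} (v : Fin n → ℂ) : (vecMulVec v (star v)).PosSemidef := by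
  rw [vecMulVec_eq (Fin 1) v (star v), ← conjTranspose_replicateCol]
  exact posSemidef_self_mul_conjTranspose _

/-- Quadratic form of a rank-one matrix factors as a product. -/
lemma dotvv {n : ℕ} (w x : Fin n → ℂ) :
    star x ⬝ᵥ (vecMulVec w (star w) *ᵥ x) = (star x ⬝ᵥ w) * (star w ⬝ᵥ x) := by
  simp only [vecMulVec, mulVec, dotProduct, of_apply, Pi.star_apply, Finset.mul_sum,
    Finset.sum_mul]
  rw [Finset.sum_comm]
  exact Finset.sum_congr rfl fun i _ => Finset.sum_congr rfl fun j _ => by ring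

/-- The POVM vectors used to show that the tetrahedral states are 2-learnable. -/
def tw (S : Finset (Fin 4)) : Fin 3 → ℂ :=
  if S = {0,1} then ![0, 1/2, 1/2]
  else if S = {0,2} then ![1/2, 1/2, 0]
  else if S = {0,3} then ![1/2, 0, 1/2]
  else if S = {1,2} then ![1/2, 0, -1/2]
  else if S = {1,3} then ![1/2, -1/2, 0]
  else if S = {2,3} then ![0, 1/2, -1/2]
  else 0

set_option maxHeartbeats 1000000 in
lemma tet_two_learnable :
    KLearnable 2 (fun i : Fin 4 =>
      ((Real.sqrt 3 : ℂ))⁻¹ •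
        ![![(1 : ℂ), 1, 1], ![1, -1, -1], ![-1, -1, 1], ![-1, 1, -1]] i) := by
  refine ⟨fun S => vecMulVec (tw S.val) (star (tw S.val)), fun S => psd_vvs _, ?_, ?_⟩
  · rw [← Finset.sum_subtype
        (({{0,1},{0,2},{0,3},{1,2},{1,3},{2,3}} : Finset (Finset (Fin 4)))) (by decide)
        (fun S => vecMulVec (tw S) (star (tw S)))]
    rw [Finset.sum_insert (by decide), Finset.sum_insert (by decide),
      Finset.sum_insert (by decide), Finset.sum_insert (by decide),
      Finset.sum_insert (by decide), Finset.sum_singleton]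
    ext i j
    fin_cases i <;> fin_cases j <;>
      simp (config := { decide := true }) [tw, vecMulVec, Matrix.one_apply] <;>
        norm_num [map_ofNat]
  · rintro ⟨S, hS⟩ i hi
    rw [dotvv, mul_eq_zero]
    right
    simp only
    fin_cases S <;>
      first
        | exact absurd hS (by decide)
        | (fin_cases i <;>
            first
              | (exfalso; revert hi; simp (config := { decide := true }); done)
              | (simp (config := { decide := true }) [tw, dotProduct, Fin.sum_univ_three] <;>
                  ring))

set_option maxHeartbeats 1000000 in
lemma tet_not_one_learnable :
    ¬ KLearnable 1 (fun i : Fin 4 =>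
      ((Real.sqrt 3 : ℂ))⁻¹ •
        ![![(1 : ℂ), 1, 1], ![1, -1, -1], ![-1, -1, 1], ![-1, 1, -1]] i) := by
  rintro ⟨M, hpsd, hsum, hzero⟩
  have key : ∀ S : {S : Finset (Fin 4) // S.card = 1}, M S = 0 := by
    rintro ⟨S, hS⟩
    obtain ⟨j, rfl⟩ := Finset.card_eq_one.mp hS
    have hz : ∀ i : Fin 4, i ≠ j →
        (M ⟨{j}, hS⟩) *ᵥ (![![(1:ℂ),1,1],![1,-1,-1],![-1,-1,1],![-1,1,-1]] i) = 0 := by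
      intro i hij
      have h := ((hpsd ⟨{j}, hS⟩).dotProduct_mulVec_zero_iff _).mp
        (hzero ⟨{j}, hS⟩ i (Finset.notMem_singleton.mpr hij))
      rw [mulVec_smul] at h
      have hc : ((Real.sqrt 3 : ℝ) : ℂ)⁻¹ ≠ 0 := by
        have h3 : (0:ℝ) < Real.sqrt 3 := Real.sqrt_pos.mpr (by norm_num)
        simp [Complex.ofReal_ne_zero]
        try exact ne_of_gt h3
      exact (smul_eq_zero.mp h).resolve_left hc
    ext k l
    simp only [Matrix.zero_apply]
    rcases (by decide : ∀ j : Fin 4, j = 0 ∨ j = 1 ∨ j = 2 ∨ j = 3) j with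
        rfl | rfl | rfl | rfl <;>
      [ (have h1 := congrFun (hz 1 (by decide)) k;
         have h2 := congrFun (hz 2 (by decide)) k;
         have h3 := congrFun (hz 3 (by decide)) k;
         simp only [Matrix.mulVec, dotProduct, Fin.sum_univ_three, Matrix.cons_val_zero,
           Matrix.cons_val_one, Matrix.head_cons, Matrix.cons_val_two, Matrix.tail_cons,
           Matrix.cons_val_three, Pi.zero_apply] at h1 h2 h3;
         rcases (by decide : ∀ l : Fin 3, l = 0 ∨ l = 1 ∨ l = 2) l with rfl | rfl | rfl;
         · linear_combination (-(1:ℂ)/2) * h2 - (1/2) * h3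
         · linear_combination (-(1:ℂ)/2) * h1 - (1/2) * h2
         · linear_combination (-(1:ℂ)/2) * h1 - (1/2) * h3);
        (have h1 := congrFun (hz 0 (by decide)) k;
         have h3 := congrFun (hz 2 (by decide)) k;
         have h4 := congrFun (hz 3 (by decide)) k;
         simp only [Matrix.mulVec, dotProduct, Fin.sum_univ_three, Matrix.cons_val_zero,
           Matrix.cons_val_one, Matrix.head_cons, Matrix.cons_val_two, Matrix.tail_cons,
           Matrix.cons_val_three, Pi.zero_apply] at h1 h3 h4;
         rcases (by decide : ∀ l : Fin 3, l = 0 ∨ l = 1 ∨ l = 2) l with rfl | rfl | rfl;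
         · linear_combination (-(1:ℂ)/2) * h3 - (1/2) * h4
         · linear_combination ((1:ℂ)/2) * h1 + (1/2) * h4
         · linear_combination ((1:ℂ)/2) * h1 + (1/2) * h3);
        (have h1 := congrFun (hz 0 (by decide)) k;
         have h2 := congrFun (hz 1 (by decide)) k;
         have h4 := congrFun (hz 3 (by decide)) k;
         simp only [Matrix.mulVec, dotProduct, Fin.sum_univ_three, Matrix.cons_val_zero,
           Matrix.cons_val_one, Matrix.head_cons, Matrix.cons_val_two, Matrix.tail_cons,
           Matrix.cons_val_three, Pi.zero_apply] at h1 h2 h4;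
         rcases (by decide : ∀ l : Fin 3, l = 0 ∨ l = 1 ∨ l = 2) l with rfl | rfl | rfl;
         · linear_combination ((1:ℂ)/2) * h1 + (1/2) * h2
         · linear_combination ((1:ℂ)/2) * h1 + (1/2) * h4
         · linear_combination (-(1:ℂ)/2) * h2 - (1/2) * h4);
        (have h1 := congrFun (hz 0 (by decide)) k;
         have h2 := congrFun (hz 1 (by decide)) k;
         have h3 := congrFun (hz 2 (by decide)) k;
         simp only [Matrix.mulVec, dotProduct, Fin.sum_univ_three, Matrix.cons_val_zero,
           Matrix.cons_val_one, Matrix.head_cons, Matrix.cons_val_two, Matrix.tail_cons,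
           Matrix.cons_val_three, Pi.zero_apply] at h1 h2 h3;
         rcases (by decide : ∀ l : Fin 3, l = 0 ∨ l = 1 ∨ l = 2) l with rfl | rfl | rfl;
         · linear_combination ((1:ℂ)/2) * h1 + (1/2) * h2
         · linear_combination (-(1:ℂ)/2) * h2 - (1/2) * h3
         · linear_combination ((1:ℂ)/2) * h1 + (1/2) * h3) ]
  rw [Finset.sum_eq_zero (fun S _ => key S)] at hsum
  have := congrFun (congrFun hsum 0) 0
  simp [Matrix.one_apply] at this


/-- The four tetrahedral states in `ℂ³` are `2`-learnable but not `1`-learnable: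
their learning width is exactly `2`. -/
theorem tetrahedral_states_learning_width_two :
    KLearnable 2 (fun i : Fin 4 =>
      ((Real.sqrt 3 : ℂ))⁻¹ •
        ![![(1 : ℂ), 1, 1], ![1, -1, -1], ![-1, -1, 1], ![-1, 1, -1]] i) ∧
    ¬ KLearnable 1 (fun i : Fin 4 =>
      ((Real.sqrt 3 : ℂ))⁻¹ •
        ![![(1 : ℂ), 1, 1], ![1, -1, -1], ![-1, -1, 1], ![-1, 1, -1]] i) :=
  ⟨tet_two_learnable, tet_not_one_learnable⟩
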